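/- Let Ω be a real locally convex topological vector space with its Borel σ-algebra, A ⊆ Ω a closed convex set, and Δ ⊆ A. Suppose every point x ∈ A is the barycenter of some Borel probability measure ν on Ω with ν(Δ) = 1 (i.e. every continuous linear functional l is ν-integrable and l(x) = ∫ l dν). Let f : Ω → ℝ be quasi-convex on A and lower semicontinuous on A. Then sup_{x ∈ A} f(x) = sup_{x ∈ Δ} f(x); equivalently, for every real a, if f(s) ≤ a for all s ∈ Δ then f(x) ≤ a for all x ∈ A. -/

import Mathlib

open MeasureTheory

theorem stmt_14
    {Ω : Type*} [AddCommGroup Ω] [Module ℝ Ω] [TopologicalSpace Ω]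
    [IsTopologicalAddGroup Ω] [ContinuousSMul ℝ Ω] [LocallyConvexSpace ℝ Ω]
    [MeasurableSpace Ω] [BorelSpace Ω]
    (A Δ : Set Ω) (hAc : IsClosed A) (hAconv : Convex ℝ A) (hΔA : Δ ⊆ A)
    (hbary : ∀ x ∈ A, ∃ ν : Measure Ω, IsProbabilityMeasure ν ∧ ν Δ = 1 ∧
      ∀ l : Ω →L[ℝ] ℝ, Integrable (fun y => l y) ν ∧ l x = ∫ y, l y ∂ν)
    (f : Ω → ℝ)
    (hfqc : ∀ x ∈ A, ∀ y ∈ A, ∀ lam : ℝ, lam ∈ Set.Icc (0 : ℝ) 1 →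
      f (lam • x + (1 - lam) • y) ≤ max (f x) (f y))
    (hflsc : ∀ a : ℝ, IsClosed {x ∈ A | f x ≤ a}) :
    (⨆ x ∈ A, (f x : EReal)) = ⨆ x ∈ Δ, (f x : EReal) := by
  have key : ∀ a : ℝ, (∀ s ∈ Δ, f s ≤ a) → ∀ x ∈ A, f x ≤ a := by
    intro a ha x hx
    by_contra hfa
    push_neg at hfa
    set B : Set Ω := {y ∈ A | f y ≤ a} with hB
    have hBc : IsClosed B := hflsc a
    have hBconv : Convex ℝ B := by
      intro y hy z hz lam mu hlam hmu hsum
      have hmu' : mu = 1 - lam := by linarith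
      subst hmu'
      refine ⟨hAconv hy.1 hz.1 hlam hmu hsum, ?_⟩
      have := hfqc y hy.1 z hz.1 lam ⟨hlam, by linarith⟩
      exact this.trans (max_le hy.2 hz.2)
    have hxB : x ∉ B := fun h => absurd h.2 (not_le.2 hfa)
    obtain ⟨ν, hprob, hνΔ, hl⟩ := hbary x hx
    have hΔB : Δ ⊆ B := fun s hs => ⟨hΔA hs, ha s hs⟩
    have hνB : ν B = 1 := le_antisymm prob_le_one (hνΔ ▸ measure_mono hΔB)
    have hνBc : ν Bᶜ = 0 := by
      rw [measure_compl hBc.measurableSet (measure_ne_top ν B), hνB, measure_univ,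
        tsub_self]
    obtain ⟨l, u, hlu, hux⟩ := geometric_hahn_banach_closed_point hBconv hBc hxB
    have hae : ∀ᵐ y ∂ν, l y ≤ u := by
      rw [ae_iff]
      refine measure_mono_null ?_ hνBc
      intro y hy
      simp only [Set.mem_setOf_eq, not_le] at hy
      exact fun hyB => absurd (hlu y hyB) (not_lt.2 hy.le)
    have hint := (hl l).1
    have h1 : ∫ y, l y ∂ν ≤ ∫ _, u ∂ν := integral_mono_ae hint (integrable_const u) hae
    rw [integral_const, probReal_univ, one_smul] at h1
    have h2 := (hl l).2
    linarith
  refine le_antisymm ?_ (iSup₂_le fun s hs => le_iSup₂_of_le s (hΔA hs) le_rfl)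
  refine iSup₂_le fun x hx => ?_
  set S : EReal := ⨆ s ∈ Δ, (f s : EReal) with hS
  rcases eq_or_ne S ⊤ with hTop | hTop
  · rw [hTop]; exact le_top
  have hΔne : Δ.Nonempty := by
    by_contra h
    rw [Set.not_nonempty_iff_eq_empty] at h
    obtain ⟨ν, hprob, hνΔ, -⟩ := hbary x hx
    rw [h, measure_empty] at hνΔ
    exact zero_ne_one hνΔ
  obtain ⟨s₀, hs₀⟩ := hΔne
  have hBot : S ≠ ⊥ := by
    refine ne_bot_of_le_ne_bot (EReal.coe_ne_bot (f s₀)) ?_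
    exact le_iSup₂_of_le s₀ hs₀ le_rfl
  have hcoe : ((S.toReal : ℝ) : EReal) = S := EReal.coe_toReal hTop hBot
  have hbound : ∀ s ∈ Δ, f s ≤ S.toReal := by
    intro s hs
    have : (f s : EReal) ≤ S := le_iSup₂_of_le s hs le_rfl
    rw [← hcoe] at this
    exact_mod_cast this
  have := key S.toReal hbound x hx
  rw [← hcoe]
  exact_mod_cast this
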